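/- Let d ≥ 2, let t > 0, let f : [0,t] → ℝ be a continuous convex function, and let ε ∈ [0,t]. Then there exist positive-semidefinite Hermitian d×d complex matrices ρ and σ with tr ρ = tr σ = t such that T(ρ,σ) = ε and |S_f(ρ) − S_f(σ)| = Δ_{t;f;d}(ε); that is, the bound Δ_{t;f;d}(ε) is exact. -/

import Mathlib

open Matrix BigOperators ComplexOrder

section Helpers
open Polynomial

private lemma charpoly_unitary_conj {d : ℕ} (U : Matrix.unitaryGroup (Fin d) ℂ)
    (D : Matrix (Fin d) (Fin d) ℂ) :
    ((U : Matrix (Fin d) (Fin d) ℂ) * D * star (U : Matrix (Fin d) (Fin d) ℂ)).charpoly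
      = D.charpoly := by
  set Uc : Matrix (Fin d) (Fin d) ℂ[X] := (U : Matrix (Fin d) (Fin d) ℂ).map C with hUc
  set Vc : Matrix (Fin d) (Fin d) ℂ[X] := (star (U : Matrix (Fin d) (Fin d) ℂ)).map C with hVc
  have hUV : Uc * Vc = 1 := by
    rw [hUc, hVc, ← Matrix.map_mul, Matrix.mem_unitaryGroup_iff.mp U.2]
    simp
  have hscalar : Uc * Matrix.scalar (Fin d) (X : ℂ[X]) * Vc = Matrix.scalar (Fin d) (X : ℂ[X]) := by
    have hc := (Matrix.scalar_commute (X : ℂ[X]) (fun r' => Commute.all _ _) Vc).eq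
    rw [mul_assoc, hc, ← mul_assoc, hUV, one_mul]
  have hmap : ((U : Matrix (Fin d) (Fin d) ℂ) * D * star (U : Matrix (Fin d) (Fin d) ℂ)).map
      (C : ℂ →+* ℂ[X]) = Uc * D.map C * Vc := by
    rw [Matrix.map_mul, Matrix.map_mul]
  have hcm : charmatrix ((U : Matrix (Fin d) (Fin d) ℂ) * D * star (U : Matrix (Fin d) (Fin d) ℂ))
      = Uc * charmatrix D * Vc := by
    rw [charmatrix, charmatrix, RingHom.mapMatrix_apply, RingHom.mapMatrix_apply, hmap,
      Matrix.mul_sub, Matrix.sub_mul, hscalar]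
  rw [Matrix.charpoly, Matrix.charpoly, hcm, det_mul, det_mul]
  have : Uc.det * Vc.det = 1 := by
    rw [← det_mul, hUV, det_one]
  calc Uc.det * (charmatrix D).det * Vc.det
      = Uc.det * Vc.det * (charmatrix D).det := by ring
    _ = (charmatrix D).det := by rw [this, one_mul]

private lemma eig_multiset {d : ℕ} (v : Fin d → ℝ)
    (h : (Matrix.diagonal (fun i => (v i : ℂ))).IsHermitian) :
    Multiset.map h.eigenvalues Finset.univ.val = Multiset.map v Finset.univ.val := by
  have hsp := h.spectral_theorem
  have hch := charpoly_unitary_conj (Matrix.IsHermitian.eigenvectorUnitary h)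
      (Matrix.diagonal (RCLike.ofReal ∘ h.eigenvalues))
  rw [Unitary.conjStarAlgAut_apply] at hsp
  rw [← hsp] at hch
  have h1 : (Matrix.diagonal (fun i => (v i : ℂ))).charpoly
      = ∏ i, (X - C ((v i : ℂ))) := by
    rw [Matrix.charpoly_of_upperTriangular _ (Matrix.blockTriangular_diagonal _)]
    simp
  have h2 : (Matrix.diagonal (RCLike.ofReal ∘ h.eigenvalues : Fin d → ℂ)).charpoly
      = ∏ i, (X - C ((h.eigenvalues i : ℂ))) := by
    rw [Matrix.charpoly_of_upperTriangular _ (Matrix.blockTriangular_diagonal _)]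
    simp [RCLike.ofReal]
  have key : ∏ i, (X - C ((h.eigenvalues i : ℂ))) = ∏ i, (X - C ((v i : ℂ))) := by
    rw [← h1, ← h2, hch]
  have hroots : (Multiset.map (fun i => ((h.eigenvalues i : ℂ))) Finset.univ.val)
      = (Multiset.map (fun i => ((v i : ℂ))) Finset.univ.val) := by
    have e1 := Polynomial.roots_multiset_prod_X_sub_C
      (Multiset.map (fun i => ((h.eigenvalues i : ℂ))) Finset.univ.val)
    have e2 := Polynomial.roots_multiset_prod_X_sub_C
      (Multiset.map (fun i => ((v i : ℂ))) Finset.univ.val)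
    rw [Multiset.map_map] at e1 e2
    have : ((Multiset.map ((fun a => X - C a) ∘ fun i => ((h.eigenvalues i : ℂ)))
        Finset.univ.val)).prod = ((Multiset.map ((fun a => X - C a) ∘ fun i => ((v i : ℂ)))
        Finset.univ.val)).prod := by
      simpa [Finset.prod, Multiset.map_map] using key
    rw [← e1, ← e2, this]
  have : Multiset.map (Complex.ofReal) (Multiset.map h.eigenvalues Finset.univ.val)
      = Multiset.map (Complex.ofReal) (Multiset.map v Finset.univ.val) := by
    rw [Multiset.map_map, Multiset.map_map]
    exact hroots
  exact Multiset.map_injective Complex.ofReal_injective this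

private lemma sum_comp_eig {d : ℕ} (v : Fin d → ℝ)
    (h : (Matrix.diagonal (fun i => (v i : ℂ))).IsHermitian) (g : ℝ → ℝ) :
    ∑ i, g (h.eigenvalues i) = ∑ i, g (v i) := by
  have := congrArg (fun s => (Multiset.map g s).sum) (eig_multiset v h)
  simpa [Finset.sum, Multiset.map_map, Function.comp_def] using this

private lemma sum_ite_fin {d : ℕ} [NeZero d] (a b : ℝ) :
    ∑ i : Fin d, (if i = 0 then a else b) = a + ((d : ℝ) - 1) * b := by
  rw [← Finset.sum_erase_add _ _ (Finset.mem_univ (0 : Fin d)),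
    Finset.sum_congr rfl (fun i hi => if_neg (Finset.ne_of_mem_erase hi)),
    Finset.sum_const, Finset.card_erase_of_mem (Finset.mem_univ _), Finset.card_univ,
    Fintype.card_fin, if_pos rfl, nsmul_eq_mul]
  have h1 : 1 ≤ d := NeZero.one_le
  rw [Nat.cast_sub h1]
  push_cast
  ring

private lemma sum_g_eig_eq {d : ℕ} {A : Matrix (Fin d) (Fin d) ℂ} (w : Fin d → ℝ)
    (hA : A.IsHermitian) (h : A = Matrix.diagonal (fun i => (w i : ℂ))) (g : ℝ → ℝ) :
    ∑ i, g (hA.eigenvalues i) = ∑ i, g (w i) := by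
  subst h; exact sum_comp_eig w hA g

private lemma delta_nonneg {t ε c : ℝ} {f : ℝ → ℝ} (ht : 0 < t) (hc : 1 ≤ c)
    (hε0 : 0 ≤ ε) (hεt : ε ≤ t) (hf : ConvexOn ℝ (Set.Icc 0 t) f) :
    0 ≤ f t - f (t - ε) - c * (f (ε / c) - f 0) := by
  have hcpos : 0 < c := lt_of_lt_of_le one_pos hc
  rcases eq_or_lt_of_le hε0 with h0 | hεpos
  · rw [← h0]; simp
  · set ε' : ℝ := ε / c with hε'
    have hε'pos : 0 < ε' := div_pos hεpos hcpos
    have hε'ε : ε' ≤ ε := div_le_self hε0 hc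
    have hε't : ε' ≤ t := hε'ε.trans hεt
    have m0 : (0:ℝ) ∈ Set.Icc 0 t := ⟨le_refl _, ht.le⟩
    have mt : t ∈ Set.Icc 0 t := ⟨ht.le, le_refl _⟩
    have mε' : ε' ∈ Set.Icc 0 t := ⟨hε'pos.le, hε't⟩
    have mtε : t - ε ∈ Set.Icc 0 t := ⟨by linarith, by linarith⟩
    have s1 : (f ε' - f 0) / (ε' - 0) ≤ (f t - f 0) / (t - 0) :=
      hf.secant_mono m0 mε' mt hε'pos.ne' ht.ne' hε't
    have s2 : (f 0 - f t) / (0 - t) ≤ (f (t - ε) - f t) / ((t - ε) - t) :=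
      hf.secant_mono mt m0 mtε (by linarith) (by linarith) (by linarith)
    rw [sub_zero, sub_zero] at s1
    have e1 : (f 0 - f t) / (0 - t) = (f t - f 0) / t := by
      rw [div_eq_div_iff (by intro h; linarith) ht.ne']; ring
    have e2 : (f (t - ε) - f t) / ((t - ε) - t) = (f t - f (t - ε)) / ε := by
      rw [div_eq_div_iff (by intro h; linarith) hεpos.ne']; ring
    rw [e1, e2] at s2
    have chain : (f ε' - f 0) / ε' ≤ (f t - f (t - ε)) / ε := s1.trans s2
    have key : ε * ((f ε' - f 0) / ε') ≤ ε * ((f t - f (t - ε)) / ε) :=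
      mul_le_mul_of_nonneg_left chain hε0
    have hce : c * ε' = ε := by rw [hε']; field_simp
    have lhs : ε * ((f ε' - f 0) / ε') = c * (f ε' - f 0) := by
      field_simp [hε', hcpos.ne']; rw [← hce]; ring
    have rhs : ε * ((f t - f (t - ε)) / ε) = f t - f (t - ε) := by
      rw [mul_comm, div_mul_cancel₀ _ hεpos.ne']
    rw [lhs, rhs] at key
    linarith

end Helpers

theorem fEntropy_bound_exact_trace_t (d : ℕ) (hd : 2 ≤ d) (t : ℝ) (ht : 0 < t)
    (f : ℝ → ℝ)
    (hf_cont : ContinuousOn f (Set.Icc 0 t))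
    (hf_conv : ConvexOn ℝ (Set.Icc 0 t) f)
    (ε : ℝ) (hε : ε ∈ Set.Icc (0 : ℝ) t) :
    ∃ (ρ σ : Matrix (Fin d) (Fin d) ℂ) (hρ : ρ.PosSemidef) (hσ : σ.PosSemidef),
      ρ.trace = (t : ℂ) ∧ σ.trace = (t : ℂ) ∧
      (1/2) * ∑ i, |(hρ.isHermitian.sub hσ.isHermitian).eigenvalues i| = ε ∧
      |(-∑ i, f (hρ.isHermitian.eigenvalues i)) - (-∑ i, f (hσ.isHermitian.eigenvalues i))| =
        f t - f (t - ε) - ((d : ℝ) - 1) * (f (ε / ((d : ℝ) - 1)) - f 0) := by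
  haveI : NeZero d := ⟨by omega⟩
  obtain ⟨hε0, hεt⟩ := hε
  have hd2 : (2:ℝ) ≤ (d:ℝ) := by exact_mod_cast hd
  have hc1 : (1:ℝ) ≤ (d:ℝ) - 1 := by linarith
  have hcpos : (0:ℝ) < (d:ℝ) - 1 := by linarith
  set c : ℝ := (d:ℝ) - 1 with hcdef
  set ε' : ℝ := ε / c with hε'def
  have hε'0 : 0 ≤ ε' := div_nonneg hε0 hcpos.le
  have hε'ε : ε' ≤ ε := div_le_self hε0 hc1
  set v : Fin d → ℝ := fun i => if i = 0 then t else 0 with hv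
  set u : Fin d → ℝ := fun i => if i = 0 then t - ε else ε' with hu
  have hv0 : ∀ i, 0 ≤ v i := by
    intro i; rw [hv]; dsimp only; split <;> [exact ht.le; exact le_refl 0]
  have hu0 : ∀ i, 0 ≤ u i := by
    intro i; rw [hu]; dsimp only; split <;> [linarith; exact hε'0]
  have hρps : (Matrix.diagonal (fun i => (v i : ℂ))).PosSemidef :=
    Matrix.posSemidef_diagonal_iff.mpr fun i => Complex.zero_le_real.mpr (hv0 i)
  have hσps : (Matrix.diagonal (fun i => (u i : ℂ))).PosSemidef :=
    Matrix.posSemidef_diagonal_iff.mpr fun i => Complex.zero_le_real.mpr (hu0 i)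
  refine ⟨_, _, hρps, hσps, ?_, ?_, ?_, ?_⟩
  · rw [Matrix.trace_diagonal]
    have : ∑ i, ((v i : ℂ)) = ((∑ i, v i : ℝ) : ℂ) := by push_cast; rfl
    rw [this, hv, sum_ite_fin]
    norm_num
  · rw [Matrix.trace_diagonal]
    have : ∑ i, ((u i : ℂ)) = ((∑ i, u i : ℝ) : ℂ) := by push_cast; rfl
    rw [this, hu, sum_ite_fin]
    have : c * ε' = ε := by rw [hε'def]; field_simp
    rw [show t - ε + ((d:ℝ) - 1) * ε' = t - ε + c * ε' from rfl, this]
    norm_num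
  · have hmat : Matrix.diagonal (fun i => (v i : ℂ)) - Matrix.diagonal (fun i => (u i : ℂ))
        = Matrix.diagonal (fun i => ((v i - u i : ℝ) : ℂ)) := by
      rw [Matrix.diagonal_sub]; congr 1; funext i; push_cast; ring
    rw [sum_g_eig_eq (fun i => v i - u i) _ hmat (fun x => |x|)]
    have habs : ∀ i : Fin d, |v i - u i| = if i = 0 then ε else ε' := by
      intro i; rw [hv, hu]; dsimp only
      by_cases h : i = 0
      · rw [if_pos h, if_pos h, if_pos h, show t - (t - ε) = ε by ring, abs_of_nonneg hε0]
      · rw [if_neg h, if_neg h, if_neg h, zero_sub, abs_neg, abs_of_nonneg hε'0]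
    rw [Finset.sum_congr rfl (fun i _ => habs i), sum_ite_fin]
    have : ((d:ℝ) - 1) * ε' = ε := by rw [hε'def]; field_simp; rw [hcdef]; ring
    rw [this]; ring
  · rw [sum_g_eig_eq v _ rfl f, sum_g_eig_eq u _ rfl f]
    have h1 : ∑ i, f (v i) = f t + ((d:ℝ) - 1) * f 0 := by
      rw [hv]
      rw [show (∑ i : Fin d, f (if i = 0 then t else 0))
        = ∑ i : Fin d, (if i = 0 then f t else f 0) from
        Finset.sum_congr rfl (fun i _ => by split <;> rfl), sum_ite_fin]
    have h2 : ∑ i, f (u i) = f (t - ε) + ((d:ℝ) - 1) * f ε' := by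
      rw [hu]
      rw [show (∑ i : Fin d, f (if i = 0 then t - ε else ε'))
        = ∑ i : Fin d, (if i = 0 then f (t - ε) else f ε') from
        Finset.sum_congr rfl (fun i _ => by split <;> rfl), sum_ite_fin]
    rw [h1, h2]
    have hΔ : 0 ≤ f t - f (t - ε) - c * (f ε' - f 0) :=
      delta_nonneg ht hc1 hε0 hεt hf_conv
    rw [abs_of_nonpos (by rw [hcdef] at hΔ; linarith)]
    ring
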